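/- Let X₁,…,X_{n+1} be real numbers, (φ_j)_{j∈J} a finite family of bounded functions in L²(ℝ), and (ψ_k)_{k∈K} a finite orthonormal family of bounded functions in L²(ℝ). Let S_m be the linear span of the functions (x,y) ↦ φ_j(x)ψ_k(y), j ∈ J, k ∈ K. Consider the Hilbert space H = (L²(ℝ))ⁿ with inner product ⟨u,v⟩ = Σ_{i=1}^n ∫_ℝ u_i v_i, and let W = { (s(X_i,·))_{1≤i≤n} : s ∈ S_m } ⊆ H. For t(x,y) = Σ_{j,k} a_{j,k} φ_j(x)ψ_k(y) in S_m, all partial derivatives of the map (a_{j,k}) ↦ γ_n(Σ_{j,k} a_{j,k} φ_j ⊗ ψ_k) vanish at (a_{j,k}) if and only if the n-tuple (t(X_i,·))_{1≤i≤n} equals the orthogonal projection onto W of the n-tuple (y ↦ Σ_{k∈K} ψ_k(X_{i+1})ψ_k(y))_{1≤i≤n}. -/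

import Mathlib

open MeasureTheory

/-- Proposition 1 of the paper.  The partial derivatives of the
contrast `γₙ` (as a function of the coefficients `a_{j,k}` of `t ∈ S_m`) all vanish
iff the `n`-tuple `(t(Xᵢ,·))ᵢ` is the orthogonal projection, in `H = (L²(ℝ))ⁿ` with
inner product `⟨u,v⟩ = Σᵢ ∫ uᵢ vᵢ`, of the tuple `(y ↦ Σₖ ψₖ(X_{i+1})ψₖ(y))ᵢ` onto
`W = {(s(Xᵢ,·))ᵢ : s ∈ S_m}`.  Since `(t(Xᵢ,·))ᵢ` already belongs to `W`, being the
orthogonal projection is expressed by its defining property: the difference is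
orthogonal to every element `(s(Xᵢ,·))ᵢ` of `W`. -/
theorem contrast_critical_iff_orthogonal_projection
    {J K : Type*} [Fintype J] [Fintype K] [DecidableEq J] [DecidableEq K]
    (n : ℕ) (hn : 0 < n) (X : ℕ → ℝ)
    (φ : J → ℝ → ℝ) (ψ : K → ℝ → ℝ)
    (hφ_meas : ∀ j, Measurable (φ j)) (hψ_meas : ∀ k, Measurable (ψ k))
    (hφ_L2 : ∀ j, MemLp (φ j) 2 (volume : Measure ℝ))
    (hψ_L2 : ∀ k, MemLp (ψ k) 2 (volume : Measure ℝ))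
    (hφ_bdd : ∀ j, ∃ C, ∀ x, |φ j x| ≤ C) (hψ_bdd : ∀ k, ∃ C, ∀ y, |ψ k y| ≤ C)
    (hψ_on : ∀ k k', ∫ y, ψ k y * ψ k' y = if k = k' then 1 else 0)
    (γ : (ℝ × ℝ → ℝ) → ℝ)
    (hγ : ∀ s, γ s = (1 / (n : ℝ)) * ∑ i ∈ Finset.range n,
      ((∫ y, s (X i, y) ^ 2) - 2 * s (X i, X (i + 1))))
    (A : J → K → ℝ) (t : ℝ × ℝ → ℝ)
    (ht : t = fun p => ∑ j, ∑ k, A j k * φ j p.1 * ψ k p.2) :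
    (∀ j₀ k₀, deriv (fun c : ℝ => γ fun p => ∑ j, ∑ k,
        (if j = j₀ ∧ k = k₀ then c else A j k) * φ j p.1 * ψ k p.2) (A j₀ k₀) = 0)
    ↔ (∀ B : J → K → ℝ,
        ∑ i ∈ Finset.range n, ∫ y,
          ((∑ k, ψ k (X (i + 1)) * ψ k y) - t (X i, y))
            * (∑ j, ∑ k, B j k * φ j (X i) * ψ k y) = 0) := by
  -- b i k : coefficient of ψ k in t(X i, ·)
  set b : ℕ → K → ℝ := fun i k => ∑ j, A j k * φ j (X i) with hb
  -- E j k : the common quantity both sides express the vanishing of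
  set E : J → K → ℝ :=
    fun j k => ∑ i ∈ Finset.range n, φ j (X i) * (ψ k (X (i + 1)) - b i k) with hEdef
  -- integrability of products
  have hint : ∀ k k' : K, Integrable (fun y => ψ k y * ψ k' y) (volume : Measure ℝ) := by
    intro k k'
    rw [← memLp_one_iff_integrable]
    have h := (hψ_L2 k).smul (hψ_L2 k') (r := 1)
    exact (by simpa [Pi.smul_apply, smul_eq_mul, mul_comm] using h : MemLp (ψ k * ψ k') 1 volume)
  -- key integral computation
  have key : ∀ c d : K → ℝ,
      (∫ y, (∑ k, c k * ψ k y) * (∑ k, d k * ψ k y)) = ∑ k, c k * d k := by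
    intro c d
    have h1 : ∀ y : ℝ, (∑ k, c k * ψ k y) * (∑ k, d k * ψ k y)
        = ∑ k, ∑ k', (c k * d k') * (ψ k y * ψ k' y) := by
      intro y
      rw [Finset.sum_mul_sum]
      exact Finset.sum_congr rfl fun k _ => Finset.sum_congr rfl fun k' _ => by ring
    calc (∫ y, (∑ k, c k * ψ k y) * (∑ k, d k * ψ k y))
        = ∫ y, ∑ k, ∑ k', (c k * d k') * (ψ k y * ψ k' y) := by simp_rw [h1]
      _ = ∑ k, ∑ k', ∫ y, (c k * d k') * (ψ k y * ψ k' y) := by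
          rw [integral_finset_sum _ fun k _ =>
            integrable_finset_sum _ fun k' _ => (hint k k').const_mul _]
          exact Finset.sum_congr rfl fun k _ =>
            integral_finset_sum _ fun k' _ => (hint k k').const_mul _
      _ = ∑ k, ∑ k', (c k * d k') * (if k = k' then 1 else 0) := by
          simp_rw [MeasureTheory.integral_const_mul, hψ_on]
      _ = ∑ k, c k * d k := by
          simp [mul_ite, Finset.sum_ite_eq]
  -- interchanging the double sums
  have hswap : ∀ (a : J → K → ℝ) (x y : ℝ),
      (∑ j, ∑ k, a j k * φ j x * ψ k y) = ∑ k, (∑ j, a j k * φ j x) * ψ k y := by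
    intro a x y
    rw [Finset.sum_comm]
    exact Finset.sum_congr rfl fun k _ => by rw [Finset.sum_mul]
  ------------------------------------------------------------------
  -- RHS : integral computation
  ------------------------------------------------------------------
  have hRint : ∀ (B : J → K → ℝ) (i : ℕ),
      (∫ y, ((∑ k, ψ k (X (i + 1)) * ψ k y) - t (X i, y))
          * (∑ j, ∑ k, B j k * φ j (X i) * ψ k y))
      = ∑ k, (ψ k (X (i + 1)) - b i k) * (∑ j, B j k * φ j (X i)) := by
    intro B i
    have h2 : ∀ y : ℝ, ((∑ k, ψ k (X (i + 1)) * ψ k y) - t (X i, y))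
          * (∑ j, ∑ k, B j k * φ j (X i) * ψ k y)
        = (∑ k, (ψ k (X (i + 1)) - b i k) * ψ k y)
          * (∑ k, (∑ j, B j k * φ j (X i)) * ψ k y) := by
      intro y
      rw [ht]
      simp only
      rw [hswap A (X i) y, hswap B (X i) y, ← Finset.sum_sub_distrib]
      congr 1
      refine Finset.sum_congr rfl fun k _ => ?_
      rw [hb, sub_mul]
    simp_rw [h2]
    exact key _ _
  have hRHS : (∀ B : J → K → ℝ,
        ∑ i ∈ Finset.range n, ∫ y,
          ((∑ k, ψ k (X (i + 1)) * ψ k y) - t (X i, y))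
            * (∑ j, ∑ k, B j k * φ j (X i) * ψ k y) = 0)
      ↔ (∀ j k, E j k = 0) := by
    constructor
    · intro H j k
      have h := H fun j' k' => if j' = j ∧ k' = k then 1 else 0
      simp_rw [hRint] at h
      rw [hEdef]
      simp only
      rw [← h]
      refine Finset.sum_congr rfl fun i _ => ?_
      simp [ite_and, ite_mul, mul_ite, Finset.sum_ite_eq', mul_comm]
    · intro hE B
      simp_rw [hRint]
      rw [Finset.sum_comm]
      refine Finset.sum_eq_zero fun k _ => ?_
      simp_rw [Finset.mul_sum]
      rw [Finset.sum_comm]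
      refine Finset.sum_eq_zero fun j _ => ?_
      have h3 : (∑ i ∈ Finset.range n,
            (ψ k (X (i + 1)) - b i k) * (B j k * φ j (X i))) = B j k * E j k := by
        rw [hEdef]
        simp only
        rw [Finset.mul_sum]
        exact Finset.sum_congr rfl fun i _ => by ring
      rw [h3, hE j k, mul_zero]
  ------------------------------------------------------------------
  -- LHS : derivative computation
  ------------------------------------------------------------------
  have hLval : ∀ j₀ k₀, deriv (fun c : ℝ => γ fun p => ∑ j, ∑ k,
        (if j = j₀ ∧ k = k₀ then c else A j k) * φ j p.1 * ψ k p.2) (A j₀ k₀)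
      = -(2 / (n : ℝ)) * E j₀ k₀ := by
    intro j₀ k₀
    -- derivative of each coefficient function
    have hD : ∀ (i : ℕ) (k : K), HasDerivAt
        (fun c : ℝ => ∑ j, (if j = j₀ ∧ k = k₀ then c else A j k) * φ j (X i))
        (if k = k₀ then φ j₀ (X i) else 0) (A j₀ k₀) := by
      intro i k
      have base : HasDerivAt
          (fun c : ℝ => ∑ j, (if j = j₀ ∧ k = k₀ then c else A j k) * φ j (X i))
          (∑ j, (if j = j₀ ∧ k = k₀ then (1 : ℝ) else 0) * φ j (X i)) (A j₀ k₀) := by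
        refine HasDerivAt.fun_sum fun j _ => ?_
        by_cases h : j = j₀ ∧ k = k₀
        · simp only [if_pos h]
          simpa using (hasDerivAt_id (A j₀ k₀)).mul_const (φ j (X i))
        · simp only [if_neg h, zero_mul]
          exact hasDerivAt_const _ _
      convert base using 1
      by_cases hk : k = k₀ <;> simp [hk, ite_and, ite_mul, Finset.sum_ite_eq']
    -- value of each coefficient function at the point A j₀ k₀
    have hDval : ∀ (i : ℕ) (k : K),
        (∑ j, (if j = j₀ ∧ k = k₀ then A j₀ k₀ else A j k) * φ j (X i)) = b i k := by
      intro i k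
      rw [hb]
      refine Finset.sum_congr rfl fun j _ => ?_
      by_cases h : j = j₀ ∧ k = k₀
      · obtain ⟨rfl, rfl⟩ := h
        simp
      · simp [h]
    -- rewrite γ applied to the parametrized function
    have hfun : (fun c : ℝ => γ fun p => ∑ j, ∑ k,
          (if j = j₀ ∧ k = k₀ then c else A j k) * φ j p.1 * ψ k p.2)
        = fun c : ℝ => (1 / (n : ℝ)) * ∑ i ∈ Finset.range n,
          ((∑ k, (∑ j, (if j = j₀ ∧ k = k₀ then c else A j k) * φ j (X i))
              * (∑ j, (if j = j₀ ∧ k = k₀ then c else A j k) * φ j (X i)))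
            - 2 * ∑ k, (∑ j, (if j = j₀ ∧ k = k₀ then c else A j k) * φ j (X i))
              * ψ k (X (i + 1))) := by
      funext c
      rw [hγ]
      congr 1
      refine Finset.sum_congr rfl fun i _ => ?_
      congr 1
      · have h4 : ∀ y : ℝ, ((fun p : ℝ × ℝ => ∑ j, ∑ k,
              (if j = j₀ ∧ k = k₀ then c else A j k) * φ j p.1 * ψ k p.2) (X i, y)) ^ 2
            = (∑ k, (∑ j, (if j = j₀ ∧ k = k₀ then c else A j k) * φ j (X i)) * ψ k y)
              * (∑ k, (∑ j, (if j = j₀ ∧ k = k₀ then c else A j k) * φ j (X i)) * ψ k y) := by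
          intro y
          simp only
          rw [hswap (fun j k => if j = j₀ ∧ k = k₀ then c else A j k) (X i) y, pow_two]
        simp_rw [h4]
        exact key _ _
      · congr 1
        simp only
        exact hswap (fun j k => if j = j₀ ∧ k = k₀ then c else A j k) (X i) (X (i + 1))
    rw [hfun]
    have hder := HasDerivAt.const_mul ((1 : ℝ) / n)
      (HasDerivAt.fun_sum fun i (_ : i ∈ Finset.range n) =>
        (HasDerivAt.fun_sum fun k (_ : k ∈ Finset.univ) => (hD i k).mul (hD i k)).sub
          (HasDerivAt.const_mul (2 : ℝ)
            (HasDerivAt.fun_sum fun k (_ : k ∈ Finset.univ) =>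
              (hD i k).mul_const (ψ k (X (i + 1))))))
    simp only [Pi.mul_apply, Pi.sub_apply] at hder
    rw [hder.deriv]
    simp_rw [hDval]
    have h5 : ∀ i : ℕ,
        ((∑ k, ((if k = k₀ then φ j₀ (X i) else 0) * b i k
            + b i k * (if k = k₀ then φ j₀ (X i) else 0)))
          - 2 * ∑ k, (if k = k₀ then φ j₀ (X i) else 0) * ψ k (X (i + 1)))
        = 2 * (φ j₀ (X i) * b i k₀) - 2 * (φ j₀ (X i) * ψ k₀ (X (i + 1))) := by
      intro i
      rw [Finset.sum_add_distrib]
      simp [ite_mul, mul_ite, Finset.sum_ite_eq']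
      ring
    simp_rw [h5]
    rw [hEdef]
    simp only
    rw [Finset.mul_sum, Finset.mul_sum]
    exact Finset.sum_congr rfl fun i _ => by ring
  ------------------------------------------------------------------
  -- combine
  ------------------------------------------------------------------
  rw [hRHS]
  constructor
  · intro H j k
    have h := H j k
    rw [hLval j k] at h
    have h2 : -(2 / (n : ℝ)) ≠ 0 := by
      simp only [ne_eq, neg_eq_zero, div_eq_zero_iff]
      push_neg
      exact ⟨two_ne_zero, Nat.cast_ne_zero.mpr hn.ne'⟩
    exact (mul_eq_zero.mp h).resolve_left h2
  · intro hE j k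
    rw [hLval j k, hE j k, mul_zero]
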